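/- arXiv:2511.01901 — 3 statements merged into one kernel-verified Lean document; each statement's English description precedes it below -/
import Mathlib

section
/- Let D ∈ C(0,ε) be positive with 1/√D integrable at 0, and let j > 0, α, β ∈ ℝ. Then there exists a unique pair (u,v) ∈ (C¹[0,ε) ∩ C²(0,ε))² solving u'' = j·u/√D, u(0)=1, u'(0)=α and v'' = j·v/√D, v(0)=0, v'(0)=β; equivalently, (u,v) is the unique continuous solution of the Volterra integral equations u(x) = 1 + αx + j∫₀^x (x−s)u(s)/√D(s) ds and v(x) = βx + j∫₀^x (x−s)v(s)/√D(s) ds. -/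
open Set MeasureTheory

namespace Stmt6

set_option linter.unusedSectionVars false

open Filter intervalIntegral Function Topology

noncomputable def g (D : ℝ → ℝ) (s : ℝ) : ℝ := 1 / Real.sqrt (D s)

lemma g_nonneg (D : ℝ → ℝ) (s : ℝ) : 0 ≤ g D s := by
  unfold g; positivity

noncomputable def G (D : ℝ → ℝ) (x : ℝ) : ℝ := ∫ s in Ioc 0 x, g D s

/-- clamp to `[0,b]` -/
def pib (b x : ℝ) : ℝ := max 0 (min x b)

noncomputable def Phi0 (j a0 a1 b : ℝ) (D w : ℝ → ℝ) (x : ℝ) : ℝ :=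
  a0 + a1 * pib b x + j * (pib b x * (∫ s in Ioc 0 (pib b x), w s * g D s) -
    ∫ s in Ioc 0 (pib b x), (s * w s) * g D s)

structure Setup (ε j : ℝ) (D : ℝ → ℝ) (b : ℝ) : Prop where
  hε : 0 < ε
  hj : 0 < j
  hDc : ContinuousOn D (Ioo 0 ε)
  hDpos : ∀ x ∈ Ioo 0 ε, 0 < D x
  hint : ∀ δ ∈ Ioo 0 ε, IntegrableOn (fun s => 1 / Real.sqrt (D s)) (Ioc 0 δ) volume
  hb0 : 0 < b
  hbε : b < ε

variable {ε j b : ℝ} {D : ℝ → ℝ}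

namespace Setup

variable (S : Setup ε j D b)
include S

lemma pib_mem (x : ℝ) : pib b x ∈ Icc 0 b := by
  constructor
  · exact le_max_left _ _
  · exact max_le S.hb0.le (min_le_right _ _)

lemma pib_eq {x : ℝ} (hx : x ∈ Icc 0 b) : pib b x = x := by
  unfold pib
  rw [min_eq_left hx.2, max_eq_right hx.1]

lemma pib_continuous : Continuous (pib b) :=
  continuous_const.max (continuous_id.min continuous_const)

lemma gint : IntegrableOn (g D) (Ioc 0 b) volume := S.hint b ⟨S.hb0, S.hbε⟩

lemma gintx {x : ℝ} (hx : x ∈ Icc 0 b) : IntegrableOn (g D) (Ioc 0 x) volume :=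
  S.gint.mono_set (Ioc_subset_Ioc_right hx.2)

lemma gcont : ContinuousOn (g D) (Ioo 0 ε) := by
  apply continuousOn_const.div (Real.continuous_sqrt.comp_continuousOn S.hDc)
  intro x hx
  exact ne_of_gt (Real.sqrt_pos.mpr (S.hDpos x hx))

lemma G_nonneg (x : ℝ) : 0 ≤ G D x :=
  setIntegral_nonneg measurableSet_Ioc fun s _ => g_nonneg D s

lemma G_mono {x : ℝ} (hx : x ∈ Icc 0 b) : G D x ≤ G D b := by
  refine setIntegral_mono_set S.gint ?_ ?_
  · exact Filter.Eventually.of_forall fun s => g_nonneg D s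
  · exact HasSubset.Subset.eventuallyLE (Ioc_subset_Ioc_right hx.2)

lemma G_cont : ContinuousOn (G D) (Icc 0 b) :=
  continuousOn_primitive ((integrableOn_Icc_iff_integrableOn_Ioc).2 S.gint)

lemma G_zero : G D 0 = 0 := by
  unfold G; simp

lemma G_eq_interval {x : ℝ} (hx : 0 ≤ x) : G D x = ∫ s in (0:ℝ)..x, g D s :=
  (intervalIntegral.integral_of_le hx).symm

/-- bounded a.e.-measurable times `g` is integrable -/
lemma integrable_mul {x : ℝ} (hx : x ∈ Icc 0 b) {r : ℝ → ℝ}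
    (hr : AEStronglyMeasurable r (volume.restrict (Ioc 0 x)))
    {C : ℝ} (hrb : ∀ s ∈ Ioc 0 x, |r s| ≤ C) :
    IntegrableOn (fun s => r s * g D s) (Ioc 0 x) volume := by
  refine (S.gintx hx).bdd_mul (c := C) hr ?_
  rw [ae_restrict_iff' measurableSet_Ioc]
  exact Filter.Eventually.of_forall fun s hs => by
    simpa [Real.norm_eq_abs] using hrb s hs

lemma Gpow_integrableOn (n : ℕ) {x : ℝ} (hx : x ∈ Icc 0 b) :
    IntegrableOn (fun s => (G D s) ^ n * g D s) (Ioc 0 x) volume := by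
  have hsub : Ioc 0 x ⊆ Icc 0 b := fun s hs => ⟨hs.1.le, hs.2.trans hx.2⟩
  refine S.integrable_mul hx (C := (G D b) ^ n)
    (((S.G_cont.pow n).mono hsub).aestronglyMeasurable measurableSet_Ioc) ?_
  intro s hs
  rw [abs_pow, abs_of_nonneg (S.G_nonneg s)]
  exact pow_le_pow_left₀ (S.G_nonneg s) (S.G_mono (hsub hs)) n

lemma integral_g_pow (n : ℕ) {x : ℝ} (hx : x ∈ Icc 0 b) :
    ∫ s in Ioc 0 x, (G D s) ^ n * g D s = (G D x) ^ (n + 1) / (n + 1) := by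
  have hx0 : (0:ℝ) ≤ x := hx.1
  have hGc : ContinuousOn (G D) (Icc 0 x) := S.G_cont.mono (Icc_subset_Icc_right hx.2)
  have hder : ∀ t ∈ Ioo 0 x, HasDerivAt (G D) (g D t) t := by
    intro t ht
    have htε : t ∈ Ioo 0 ε := ⟨ht.1, lt_of_lt_of_le ht.2 (hx.2.trans S.hbε.le)⟩
    have h1 : HasDerivAt (fun u => ∫ s in (0:ℝ)..u, g D s) (g D t) t := by
      apply intervalIntegral.integral_hasDerivAt_right
      · exact (intervalIntegrable_iff_integrableOn_Ioc_of_le ht.1.le).2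
          (S.gintx ⟨ht.1.le, ht.2.le.trans hx.2⟩)
      · exact S.gcont.stronglyMeasurableAtFilter isOpen_Ioo t htε
      · exact S.gcont.continuousAt (Ioo_mem_nhds htε.1 htε.2)
    apply h1.congr_of_eventuallyEq
    filter_upwards [Ioi_mem_nhds ht.1] with u hu
    exact S.G_eq_interval (le_of_lt hu)
  have hHder : ∀ t ∈ Ioo 0 x,
      HasDerivAt (fun t => (G D t) ^ (n + 1) / (n + 1)) ((G D t) ^ n * g D t) t := by
    intro t ht
    have h2 := ((hder t ht).fun_pow (n + 1)).div_const ((n : ℝ) + 1)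
    refine h2.congr_deriv ?_
    have hn1 : ((n : ℝ) + 1) ≠ 0 := by positivity
    push_cast
    field_simp
  have hint' : IntervalIntegrable (fun s => (G D s) ^ n * g D s) volume 0 x :=
    (intervalIntegrable_iff_integrableOn_Ioc_of_le hx0).2 (S.Gpow_integrableOn n hx)
  have hHcont : ContinuousOn (fun t => (G D t) ^ (n + 1) / ((n : ℝ) + 1)) (Icc 0 x) :=
    (hGc.pow (n + 1)).div_const _
  have := intervalIntegral.integral_eq_sub_of_hasDerivAt_of_le hx0 hHcont hHder hint'
  rw [intervalIntegral.integral_of_le hx0] at this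
  rw [this, S.G_zero]
  have hn1 : ((n : ℝ) + 1) ≠ 0 := by positivity
  rw [zero_pow (Nat.succ_ne_zero n)]
  push_cast
  ring

/-- Key iteration estimate. -/
lemma key (n : ℕ) {C : ℝ} (hC : 0 ≤ C) {r : ℝ → ℝ}
    (hr : AEStronglyMeasurable r (volume.restrict (Ioc 0 b)))
    (hrb : ∀ s ∈ Ioc 0 b, |r s| ≤ C * (j * b) ^ n * (G D s) ^ n / n.factorial)
    {x : ℝ} (hx : x ∈ Icc 0 b) :
    |j * ∫ s in (0:ℝ)..x, (x - s) * r s * g D s| ≤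
      C * (j * b) ^ (n + 1) * (G D x) ^ (n + 1) / (n + 1).factorial := by
  have hx0 : (0:ℝ) ≤ x := hx.1
  have hb0 : (0:ℝ) < b := S.hb0
  have hsubb : Ioc 0 x ⊆ Ioc 0 b := Ioc_subset_Ioc_right hx.2
  have hfac : (0:ℝ) < n.factorial := by exact_mod_cast n.factorial_pos
  have hjb : (0:ℝ) ≤ (j * b) ^ n := pow_nonneg (mul_nonneg S.hj.le S.hb0.le) n
  -- integrability of the integrand
  have hint1 : IntegrableOn (fun s => ((x - s) * r s) * g D s) (Ioc 0 x) volume := by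
    refine S.integrable_mul hx (C := b * (C * (j * b) ^ n * (G D b) ^ n / n.factorial)) ?_ ?_
    · exact ((continuous_const.sub continuous_id).aestronglyMeasurable.restrict).mul
        (hr.mono_measure (Measure.restrict_mono hsubb le_rfl))
    · intro s hs
      rw [abs_mul]
      refine mul_le_mul ?_ ?_ (abs_nonneg _) hb0.le
      · rw [abs_of_nonneg (sub_nonneg.2 hs.2)]
        have := hs.1
        linarith [hx.2]
      · refine (hrb s (hsubb hs)).trans ?_
        have h3 : (G D s) ^ n ≤ (G D b) ^ n :=
          pow_le_pow_left₀ (S.G_nonneg s) (S.G_mono ⟨hs.1.le, hs.2.trans hx.2⟩) n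
        exact (div_le_div_iff_of_pos_right hfac).2 (mul_le_mul_of_nonneg_left h3 (mul_nonneg hC hjb))
  have hpt : ∀ s ∈ Ioc 0 x,
      |(x - s) * r s * g D s| ≤ (b * C * (j * b) ^ n / n.factorial) * ((G D s) ^ n * g D s) := by
    intro s hs
    have hxs : |x - s| ≤ b := by
      rw [abs_of_nonneg (sub_nonneg.2 hs.2)]
      have := hs.1
      linarith [hx.2]
    calc |(x - s) * r s * g D s| = (|x - s| * |r s|) * g D s := by
          rw [abs_mul, abs_mul, abs_of_nonneg (g_nonneg D s)]
      _ ≤ (b * (C * (j * b) ^ n * (G D s) ^ n / n.factorial)) * g D s := by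
          refine mul_le_mul_of_nonneg_right ?_ (g_nonneg D s)
          exact mul_le_mul hxs (hrb s (hsubb hs)) (abs_nonneg _) hb0.le
      _ = (b * C * (j * b) ^ n / n.factorial) * ((G D s) ^ n * g D s) := by ring
  have habs : |∫ s in (0:ℝ)..x, (x - s) * r s * g D s| ≤
      (b * C * (j * b) ^ n / n.factorial) * ((G D x) ^ (n + 1) / (n + 1)) := by
    rw [intervalIntegral.integral_of_le hx0]
    calc |∫ s in Ioc 0 x, (x - s) * r s * g D s|
        ≤ ∫ s in Ioc 0 x, |(x - s) * r s * g D s| := by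
          simpa only [Real.norm_eq_abs] using
            MeasureTheory.norm_integral_le_integral_norm (μ := volume.restrict (Ioc 0 x))
              (fun s => (x - s) * r s * g D s)
      _ ≤ ∫ s in Ioc 0 x, (b * C * (j * b) ^ n / n.factorial) * ((G D s) ^ n * g D s) := by
          refine setIntegral_mono_on ?_ ?_ measurableSet_Ioc hpt
          · exact hint1.abs
          · exact (S.Gpow_integrableOn n hx).const_mul _
      _ = (b * C * (j * b) ^ n / n.factorial) * ((G D x) ^ (n + 1) / (n + 1)) := by
          rw [MeasureTheory.integral_const_mul, S.integral_g_pow n hx]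
  calc |j * ∫ s in (0:ℝ)..x, (x - s) * r s * g D s|
      = j * |∫ s in (0:ℝ)..x, (x - s) * r s * g D s| := by
        rw [abs_mul, abs_of_pos S.hj]
    _ ≤ j * ((b * C * (j * b) ^ n / n.factorial) * ((G D x) ^ (n + 1) / (n + 1))) :=
        mul_le_mul_of_nonneg_left habs S.hj.le
    _ = C * (j * b) ^ (n + 1) * (G D x) ^ (n + 1) / (n + 1).factorial := by
        rw [Nat.factorial_succ]
        have h1 : ((n:ℝ) + 1) ≠ 0 := by positivity
        have h2 : ((n.factorial:ℝ)) ≠ 0 := ne_of_gt hfac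
        push_cast
        field_simp
        ring

lemma solInt {w : ℝ → ℝ} (hw : ContinuousOn w (Icc 0 b)) {x : ℝ} (hx : x ∈ Icc 0 b) :
    IntervalIntegrable (fun s => (x - s) * w s * g D s) volume 0 x := by
  obtain ⟨M, hM⟩ := isCompact_Icc.exists_bound_of_continuousOn hw
  refine (intervalIntegrable_iff_integrableOn_Ioc_of_le hx.1).2 ?_
  have hsub : Ioc 0 x ⊆ Icc 0 b := fun s hs => ⟨hs.1.le, hs.2.trans hx.2⟩
  refine S.integrable_mul hx (C := b * M) ?_ ?_
  · exact (((continuous_const.sub continuous_id).continuousOn.mul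
      (hw.mono hsub)).aestronglyMeasurable measurableSet_Ioc)
  · intro s hs
    rw [abs_mul]
    refine mul_le_mul ?_ ?_ (abs_nonneg _) S.hb0.le
    · rw [abs_of_nonneg (sub_nonneg.2 hs.2)]
      have := hs.1
      linarith [hx.2]
    · simpa [Real.norm_eq_abs] using hM s (hsub hs)

omit S in
lemma int_eq (w : ℝ → ℝ) (x : ℝ) :
    (∫ s in (0:ℝ)..x, (x - s) * w s * g D s) =
      ∫ s in (0:ℝ)..x, (x - s) * w s / Real.sqrt (D s) := by
  simp only [g, mul_one_div]

lemma diff_eq (a₀ a₁ : ℝ) {w₁ w₂ : ℝ → ℝ}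
    (h₁ : ContinuousOn w₁ (Icc 0 b)) (h₂ : ContinuousOn w₂ (Icc 0 b))
    (e₁ : ∀ x ∈ Icc 0 b, w₁ x = a₀ + a₁ * x + j * ∫ s in (0:ℝ)..x, (x - s) * w₁ s / Real.sqrt (D s))
    (e₂ : ∀ x ∈ Icc 0 b, w₂ x = a₀ + a₁ * x + j * ∫ s in (0:ℝ)..x, (x - s) * w₂ s / Real.sqrt (D s))
    {x : ℝ} (hx : x ∈ Icc 0 b) :
    w₁ x - w₂ x = j * ∫ s in (0:ℝ)..x, (x - s) * (w₁ s - w₂ s) * g D s := by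
  have hdiff : (∫ s in (0:ℝ)..x, (x - s) * (w₁ s - w₂ s) * g D s) =
      (∫ s in (0:ℝ)..x, (x - s) * w₁ s * g D s) -
        ∫ s in (0:ℝ)..x, (x - s) * w₂ s * g D s := by
    rw [← intervalIntegral.integral_sub (S.solInt h₁ hx) (S.solInt h₂ hx)]
    apply intervalIntegral.integral_congr
    intro s _
    ring
  rw [e₁ x hx, e₂ x hx, ← int_eq, ← int_eq, hdiff]
  ring

/-- Uniqueness of continuous solutions on `[0, b]`. -/
lemma uniq (a₀ a₁ : ℝ) (w₁ w₂ : ℝ → ℝ)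
    (h₁ : ContinuousOn w₁ (Icc 0 b)) (h₂ : ContinuousOn w₂ (Icc 0 b))
    (e₁ : ∀ x ∈ Icc 0 b, w₁ x = a₀ + a₁ * x + j * ∫ s in (0:ℝ)..x, (x - s) * w₁ s / Real.sqrt (D s))
    (e₂ : ∀ x ∈ Icc 0 b, w₂ x = a₀ + a₁ * x + j * ∫ s in (0:ℝ)..x, (x - s) * w₂ s / Real.sqrt (D s)) :
    ∀ x ∈ Icc 0 b, w₁ x = w₂ x := by
  obtain ⟨M, hM⟩ := isCompact_Icc.exists_bound_of_continuousOn (h₁.sub h₂)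
  have hM0 : 0 ≤ M := le_trans (norm_nonneg _) (hM 0 ⟨le_refl 0, S.hb0.le⟩)
  have hfac : ∀ n : ℕ, (0:ℝ) < n.factorial := fun n => by exact_mod_cast n.factorial_pos
  have hrASM : AEStronglyMeasurable (fun s => w₁ s - w₂ s) (volume.restrict (Ioc 0 b)) :=
    ((h₁.sub h₂).mono Ioc_subset_Icc_self).aestronglyMeasurable measurableSet_Ioc
  have main : ∀ n : ℕ, ∀ x ∈ Icc 0 b,
      |w₁ x - w₂ x| ≤ M * (j * b) ^ n * (G D x) ^ n / n.factorial := by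
    intro n
    induction n with
    | zero =>
      intro x hx
      simpa [Real.norm_eq_abs] using hM x hx
    | succ n ih =>
      intro x hx
      rw [S.diff_eq a₀ a₁ h₁ h₂ e₁ e₂ hx]
      exact S.key n hM0 hrASM (fun s hs => ih s ⟨hs.1.le, hs.2⟩) hx
  intro x hx
  have h0 : ∀ n : ℕ, |w₁ x - w₂ x| ≤ M * (j * b * G D b) ^ n / n.factorial := by
    intro n
    refine (main n x hx).trans ?_
    have h3 := pow_le_pow_left₀ (S.G_nonneg x) (S.G_mono hx) n
    have h4 : M * (j * b) ^ n * (G D x) ^ n ≤ M * (j * b) ^ n * (G D b) ^ n :=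
      mul_le_mul_of_nonneg_left h3
        (mul_nonneg hM0 (pow_nonneg (mul_nonneg S.hj.le S.hb0.le) n))
    refine le_trans ((div_le_div_iff_of_pos_right (hfac n)).2 h4) (le_of_eq ?_)
    rw [mul_pow]
    ring
  have hlim : Tendsto (fun n : ℕ => M * (j * b * G D b) ^ n / n.factorial) atTop (𝓝 0) := by
    have h5 := ((Real.summable_pow_div_factorial (j * b * G D b)).tendsto_atTop_zero).const_mul M
    simpa [mul_div_assoc] using h5
  have h6 : |w₁ x - w₂ x| ≤ 0 := ge_of_tendsto' hlim h0
  have h7 := abs_nonneg (w₁ x - w₂ x)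
  have : w₁ x - w₂ x = 0 := abs_eq_zero.1 (le_antisymm h6 h7)
  linarith

lemma wg_int (w : BoundedContinuousFunction ℝ ℝ) {x : ℝ} (hx : x ∈ Icc 0 b) :
    IntegrableOn (fun s => w s * g D s) (Ioc 0 x) volume :=
  S.integrable_mul hx (C := ‖w‖) w.continuous.aestronglyMeasurable.restrict
    (fun s _ => by simpa [Real.norm_eq_abs] using w.norm_coe_le_norm s)

lemma swg_int (w : BoundedContinuousFunction ℝ ℝ) {x : ℝ} (hx : x ∈ Icc 0 b) :
    IntegrableOn (fun s => (s * w s) * g D s) (Ioc 0 x) volume := by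
  refine S.integrable_mul hx (C := b * ‖w‖)
    ((continuous_id.mul w.continuous).aestronglyMeasurable.restrict) ?_
  intro s hs
  rw [abs_mul]
  refine mul_le_mul ?_ (by simpa [Real.norm_eq_abs] using w.norm_coe_le_norm s)
    (abs_nonneg _) S.hb0.le
  rw [abs_of_nonneg hs.1.le]
  exact hs.2.trans hx.2

lemma Phi0_apply (a₀ a₁ : ℝ) (w : BoundedContinuousFunction ℝ ℝ) (x : ℝ) :
    Phi0 j a₀ a₁ b D w x =
      a₀ + a₁ * pib b x + j * ∫ s in (0:ℝ)..(pib b x), (pib b x - s) * w s * g D s := by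
  have hy := S.pib_mem x
  set y := pib b x with hydef
  have int1 : IntervalIntegrable (fun s => y * (w s * g D s)) volume 0 y :=
    ((intervalIntegrable_iff_integrableOn_Ioc_of_le hy.1).2 (S.wg_int w hy)).const_mul y
  have int2 : IntervalIntegrable (fun s => (s * w s) * g D s) volume 0 y :=
    (intervalIntegrable_iff_integrableOn_Ioc_of_le hy.1).2 (S.swg_int w hy)
  have h8 : (∫ s in (0:ℝ)..y, (y - s) * w s * g D s) =
      (∫ s in (0:ℝ)..y, y * (w s * g D s)) - ∫ s in (0:ℝ)..y, (s * w s) * g D s := by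
    rw [← intervalIntegral.integral_sub int1 int2]
    apply intervalIntegral.integral_congr
    intro s _
    ring
  unfold Phi0
  rw [← hydef, h8, intervalIntegral.integral_const_mul,
    intervalIntegral.integral_of_le hy.1, intervalIntegral.integral_of_le hy.1]

lemma Phi0_continuous (a₀ a₁ : ℝ) (w : BoundedContinuousFunction ℝ ℝ) :
    Continuous (Phi0 j a₀ a₁ b D w) := by
  have hbIcc : b ∈ Icc (0:ℝ) b := ⟨S.hb0.le, le_refl b⟩
  have hA : ContinuousOn (fun t => ∫ s in Ioc 0 t, w s * g D s) (Icc 0 b) :=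
    continuousOn_primitive ((integrableOn_Icc_iff_integrableOn_Ioc).2 (S.wg_int w hbIcc))
  have hB : ContinuousOn (fun t => ∫ s in Ioc 0 t, (s * w s) * g D s) (Icc 0 b) :=
    continuousOn_primitive ((integrableOn_Icc_iff_integrableOn_Ioc).2 (S.swg_int w hbIcc))
  have hπ : Continuous (pib b) := pib_continuous S
  have hAc : Continuous fun x => ∫ s in Ioc 0 (pib b x), w s * g D s :=
    hA.comp_continuous hπ (fun x => S.pib_mem x)
  have hBc : Continuous fun x => ∫ s in Ioc 0 (pib b x), (s * w s) * g D s :=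
    hB.comp_continuous hπ (fun x => S.pib_mem x)
  exact (continuous_const.add (continuous_const.mul hπ)).add
    (continuous_const.mul ((hπ.mul hAc).sub hBc))

lemma Phi0_bound (a₀ a₁ : ℝ) (w : BoundedContinuousFunction ℝ ℝ) (x : ℝ) :
    ‖Phi0 j a₀ a₁ b D w x‖ ≤ |a₀| + |a₁| * b + ‖w‖ * (j * b) * G D b := by
  rw [Real.norm_eq_abs, S.Phi0_apply a₀ a₁ w x]
  have hy := S.pib_mem x
  set y := pib b x
  have h1 : |j * ∫ s in (0:ℝ)..y, (y - s) * w s * g D s| ≤ ‖w‖ * (j * b) * G D y := by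
    have hkey := S.key 0 (norm_nonneg w) w.continuous.aestronglyMeasurable.restrict
      (r := fun s => w s) (fun s _ => by
        simpa [Real.norm_eq_abs] using w.norm_coe_le_norm s) hy
    simpa using hkey
  calc |a₀ + a₁ * y + j * ∫ s in (0:ℝ)..y, (y - s) * w s * g D s|
      ≤ |a₀ + a₁ * y| + |j * ∫ s in (0:ℝ)..y, (y - s) * w s * g D s| := abs_add_le _ _
    _ ≤ (|a₀| + |a₁ * y|) + ‖w‖ * (j * b) * G D y := add_le_add (abs_add_le _ _) h1
    _ ≤ |a₀| + |a₁| * b + ‖w‖ * (j * b) * G D b := by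
        have h2 : |a₁ * y| ≤ |a₁| * b := by
          rw [abs_mul, abs_of_nonneg hy.1]
          exact mul_le_mul_of_nonneg_left hy.2 (abs_nonneg a₁)
        have h3 : ‖w‖ * (j * b) * G D y ≤ ‖w‖ * (j * b) * G D b :=
          mul_le_mul_of_nonneg_left (S.G_mono hy)
            (mul_nonneg (norm_nonneg w) (mul_nonneg S.hj.le S.hb0.le))
        linarith

noncomputable def Phi (a₀ a₁ : ℝ) (w : BoundedContinuousFunction ℝ ℝ) :
    BoundedContinuousFunction ℝ ℝ :=
  BoundedContinuousFunction.ofNormedAddCommGroup (Phi0 j a₀ a₁ b D w)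
    (S.Phi0_continuous a₀ a₁ w) _ (S.Phi0_bound a₀ a₁ w)

lemma Phi_apply (a₀ a₁ : ℝ) (w : BoundedContinuousFunction ℝ ℝ) (x : ℝ) :
    S.Phi a₀ a₁ w x =
      a₀ + a₁ * pib b x + j * ∫ s in (0:ℝ)..(pib b x), (pib b x - s) * w s * g D s :=
  S.Phi0_apply a₀ a₁ w x

lemma iterate_est (a₀ a₁ : ℝ) (w₁ w₂ : BoundedContinuousFunction ℝ ℝ) :
    ∀ (n : ℕ) (x : ℝ),
      |((S.Phi a₀ a₁)^[n] w₁ : BoundedContinuousFunction ℝ ℝ) x - ((S.Phi a₀ a₁)^[n] w₂) x| ≤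
        dist w₁ w₂ * (j * b) ^ n * (G D (pib b x)) ^ n / n.factorial := by
  intro n
  induction n with
  | zero =>
    intro x
    simp only [Function.iterate_zero_apply, pow_zero, Nat.factorial_zero, Nat.cast_one,
      mul_one, div_one]
    rw [← Real.dist_eq]
    exact BoundedContinuousFunction.dist_coe_le_dist x
  | succ n ih =>
    intro x
    rw [Function.iterate_succ_apply', Function.iterate_succ_apply']
    set p := (S.Phi a₀ a₁)^[n] w₁ with hp
    set q := (S.Phi a₀ a₁)^[n] w₂ with hq
    have hy := S.pib_mem x
    rw [S.Phi_apply, S.Phi_apply]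
    set y := pib b x
    have h8 : (∫ s in (0:ℝ)..y, (y - s) * (p s - q s) * g D s) =
        (∫ s in (0:ℝ)..y, (y - s) * p s * g D s) -
          ∫ s in (0:ℝ)..y, (y - s) * q s * g D s := by
      rw [← intervalIntegral.integral_sub (S.solInt p.continuous.continuousOn hy)
        (S.solInt q.continuous.continuousOn hy)]
      apply intervalIntegral.integral_congr
      intro s _
      ring
    have h9 : (a₀ + a₁ * y + j * ∫ s in (0:ℝ)..y, (y - s) * p s * g D s) -
        (a₀ + a₁ * y + j * ∫ s in (0:ℝ)..y, (y - s) * q s * g D s) =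
        j * ∫ s in (0:ℝ)..y, (y - s) * (p s - q s) * g D s := by
      rw [h8]
      ring
    rw [h9]
    refine S.key n dist_nonneg
      ((p.continuous.sub q.continuous).aestronglyMeasurable.restrict) ?_ hy
    intro s hs
    have := ih s
    rwa [S.pib_eq ⟨hs.1.le, hs.2⟩] at this

/-- Existence of a continuous solution on `[0, b]`. -/
lemma exist (a₀ a₁ : ℝ) :
    ∃ w : ℝ → ℝ, ContinuousOn w (Icc 0 b) ∧
      ∀ x ∈ Icc 0 b, w x = a₀ + a₁ * x + j * ∫ s in (0:ℝ)..x, (x - s) * w s / Real.sqrt (D s) := by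
  have hc0 : (0:ℝ) ≤ j * b * G D b :=
    mul_nonneg (mul_nonneg S.hj.le S.hb0.le) (S.G_nonneg b)
  obtain ⟨n, hn⟩ : ∃ n : ℕ, (j * b * G D b) ^ n / n.factorial < 1 :=
    (((Real.summable_pow_div_factorial (j * b * G D b)).tendsto_atTop_zero).eventually
      (gt_mem_nhds one_pos)).exists
  have hfac : (0:ℝ) < n.factorial := by exact_mod_cast n.factorial_pos
  have hKnn : (0:ℝ) ≤ (j * b * G D b) ^ n / n.factorial :=
    div_nonneg (pow_nonneg hc0 n) hfac.le
  set K : NNReal := ⟨(j * b * G D b) ^ n / n.factorial, hKnn⟩ with hK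
  have hLip : LipschitzWith K ((S.Phi a₀ a₁)^[n]) := by
    refine LipschitzWith.of_dist_le_mul fun w₁ w₂ => ?_
    show dist ((S.Phi a₀ a₁)^[n] w₁) ((S.Phi a₀ a₁)^[n] w₂) ≤
      (j * b * G D b) ^ n / ↑n.factorial * dist w₁ w₂
    rw [BoundedContinuousFunction.dist_le (mul_nonneg hKnn dist_nonneg)]
    intro x
    rw [Real.dist_eq]
    refine (S.iterate_est a₀ a₁ w₁ w₂ n x).trans ?_
    have h3 : (G D (pib b x)) ^ n ≤ (G D b) ^ n :=
      pow_le_pow_left₀ (S.G_nonneg _) (S.G_mono (S.pib_mem x)) n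
    have h4 : dist w₁ w₂ * (j * b) ^ n * (G D (pib b x)) ^ n ≤
        dist w₁ w₂ * (j * b) ^ n * (G D b) ^ n :=
      mul_le_mul_of_nonneg_left h3
        (mul_nonneg dist_nonneg (pow_nonneg (mul_nonneg S.hj.le S.hb0.le) n))
    refine le_trans ((div_le_div_iff_of_pos_right hfac).2 h4) (le_of_eq ?_)
    show dist w₁ w₂ * (j * b) ^ n * G D b ^ n / ↑n.factorial =
      (j * b * G D b) ^ n / ↑n.factorial * dist w₁ w₂
    rw [mul_pow]
    ring
  have hK1 : K < 1 := by
    rw [← NNReal.coe_lt_coe]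
    exact hn
  have hCW : ContractingWith K ((S.Phi a₀ a₁)^[n]) := ⟨hK1, hLip⟩
  set w0 : BoundedContinuousFunction ℝ ℝ := ContractingWith.fixedPoint _ hCW with hw0
  have hfp : Function.IsFixedPt ((S.Phi a₀ a₁)^[n]) w0 := hCW.fixedPoint_isFixedPt
  have hfix : S.Phi a₀ a₁ w0 = w0 := by
    have h9 : Function.IsFixedPt ((S.Phi a₀ a₁)^[n]) (S.Phi a₀ a₁ w0) := by
      show ((S.Phi a₀ a₁)^[n]) (S.Phi a₀ a₁ w0) = S.Phi a₀ a₁ w0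
      rw [← Function.iterate_succ_apply, Function.iterate_succ_apply']
      rw [hfp]
    have h10 := hCW.fixedPoint_unique h9
    rw [h10, ← hw0]
  refine ⟨w0, w0.continuous.continuousOn, ?_⟩
  intro x hx
  have h11 : S.Phi a₀ a₁ w0 x = w0 x := by rw [hfix]
  rw [← h11, S.Phi_apply, S.pib_eq hx, int_eq]

end Setup

/-- Existence and uniqueness on `[0, ε)`. -/
lemma master (hε : 0 < ε) (hj : 0 < j)
    (hDc : ContinuousOn D (Ioo 0 ε)) (hDpos : ∀ x ∈ Ioo 0 ε, 0 < D x)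
    (hint : ∀ δ ∈ Ioo 0 ε, IntegrableOn (fun s => 1 / Real.sqrt (D s)) (Ioc 0 δ) volume)
    (a₀ a₁ : ℝ) :
    ∃ w : ℝ → ℝ, ContinuousOn w (Ico 0 ε) ∧
      (∀ x ∈ Ico 0 ε, w x = a₀ + a₁ * x + j * ∫ s in (0:ℝ)..x, (x - s) * w s / Real.sqrt (D s)) ∧
      ∀ w₂ : ℝ → ℝ, ContinuousOn w₂ (Ico 0 ε) →
        (∀ x ∈ Ico 0 ε, w₂ x = a₀ + a₁ * x + j * ∫ s in (0:ℝ)..x, (x - s) * w₂ s / Real.sqrt (D s)) →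
        ∀ x ∈ Ico 0 ε, w₂ x = w x := by
  have hS : ∀ c ∈ Ioo (0:ℝ) ε, Setup ε j D c := fun c hc => ⟨hε, hj, hDc, hDpos, hint, hc.1, hc.2⟩
  have hex : ∀ c ∈ Ioo (0:ℝ) ε, ∃ w : ℝ → ℝ, ContinuousOn w (Icc 0 c) ∧
      ∀ x ∈ Icc 0 c, w x = a₀ + a₁ * x + j * ∫ s in (0:ℝ)..x, (x - s) * w s / Real.sqrt (D s) :=
    fun c hc => (hS c hc).exist a₀ a₁
  choose sol hsolc hsole using hex
  have hcons : ∀ c₁ (hc₁ : c₁ ∈ Ioo (0:ℝ) ε) c₂ (hc₂ : c₂ ∈ Ioo (0:ℝ) ε), c₁ ≤ c₂ →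
      ∀ x ∈ Icc 0 c₁, sol c₁ hc₁ x = sol c₂ hc₂ x := by
    intro c₁ hc₁ c₂ hc₂ hle x hx
    exact (hS c₁ hc₁).uniq a₀ a₁ _ _ (hsolc c₁ hc₁)
      ((hsolc c₂ hc₂).mono (Icc_subset_Icc_right hle)) (hsole c₁ hc₁)
      (fun y hy => hsole c₂ hc₂ y ⟨hy.1, hy.2.trans hle⟩) x hx
  have hmem : ∀ x ∈ Ico (0:ℝ) ε, (x + ε)/2 ∈ Ioo (0:ℝ) ε := by
    intro x hx
    constructor
    · linarith [hx.1, hε]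
    · linarith [hx.2]
  set w : ℝ → ℝ := fun x => if hx : (x + ε)/2 ∈ Ioo (0:ℝ) ε then sol _ hx x else 0 with hwdef
  have hw : ∀ c (hc : c ∈ Ioo (0:ℝ) ε) x, x ∈ Icc 0 c → w x = sol c hc x := by
    intro c hc x hx
    have hx' : x ∈ Ico (0:ℝ) ε := ⟨hx.1, lt_of_le_of_lt hx.2 hc.2⟩
    have hm := hmem x hx'
    have hxm : x ≤ (x + ε)/2 := by linarith [hx'.2]
    rw [hwdef]
    simp only
    rw [dif_pos hm]
    rcases le_total ((x + ε)/2) c with h | h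
    · exact hcons _ hm c hc h x ⟨hx.1, hxm⟩
    · exact (hcons c hc _ hm h x hx).symm
  refine ⟨w, ?_, ?_, ?_⟩
  · intro x hx
    have hm := hmem x hx
    have hxc : x < (x + ε)/2 := by linarith [hx.2]
    rw [← continuousWithinAt_inter (Iio_mem_nhds hxc)]
    have hsub : Ico 0 ε ∩ Iio ((x + ε)/2) ⊆ Icc 0 ((x + ε)/2) := fun y hy => ⟨hy.1.1, hy.2.le⟩
    have hCWA : ContinuousWithinAt (sol _ hm) (Ico 0 ε ∩ Iio ((x + ε)/2)) x :=
      (hsolc _ hm x ⟨hx.1, hxc.le⟩).mono hsub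
    exact hCWA.congr (fun y hy => hw _ hm y (hsub hy)) (hw _ hm x ⟨hx.1, hxc.le⟩)
  · intro x hx
    have hm := hmem x hx
    have hxc : x ≤ (x + ε)/2 := by linarith [hx.2]
    have hxI : x ∈ Icc 0 ((x + ε)/2) := ⟨hx.1, hxc⟩
    rw [hw _ hm x hxI, hsole _ hm x hxI]
    have hIeq : (∫ s in (0:ℝ)..x, (x - s) * sol _ hm s / Real.sqrt (D s)) =
        ∫ s in (0:ℝ)..x, (x - s) * w s / Real.sqrt (D s) := by
      apply intervalIntegral.integral_congr
      intro s hs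
      rw [uIcc_of_le hx.1] at hs
      show (x - s) * sol _ hm s / Real.sqrt (D s) = (x - s) * w s / Real.sqrt (D s)
      rw [← hw _ hm s ⟨hs.1, hs.2.trans hxc⟩]
    rw [hIeq]
  · intro w₂ hw₂c hw₂e x hx
    have hm := hmem x hx
    have hxc : x ≤ (x + ε)/2 := by linarith [hx.2]
    have hsub : Icc 0 ((x + ε)/2) ⊆ Ico 0 ε := fun y hy => ⟨hy.1, lt_of_le_of_lt hy.2 hm.2⟩
    have h12 := (hS _ hm).uniq a₀ a₁ w₂ (sol _ hm) (hw₂c.mono hsub) (hsolc _ hm)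
      (fun y hy => hw₂e y (hsub hy)) (hsole _ hm) x ⟨hx.1, hxc⟩
    rw [h12, ← hw _ hm x ⟨hx.1, hxc⟩]

end Stmt6

theorem stmt_6 (ε j α β : ℝ) (hε : 0 < ε) (hj : 0 < j)
    (D : ℝ → ℝ)
    (hDc : ContinuousOn D (Ioo 0 ε)) (hDpos : ∀ x ∈ Ioo 0 ε, 0 < D x)
    (hint : ∀ δ ∈ Ioo 0 ε,
      IntegrableOn (fun s => 1 / Real.sqrt (D s)) (Ioc 0 δ) volume) :
    ∃ u v : ℝ → ℝ,
      (ContinuousOn u (Ico 0 ε) ∧ ContinuousOn v (Ico 0 ε) ∧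
        (∀ x ∈ Ico 0 ε,
          u x = 1 + α * x + j * ∫ s in (0 : ℝ)..x, (x - s) * u s / Real.sqrt (D s)) ∧
        (∀ x ∈ Ico 0 ε,
          v x = β * x + j * ∫ s in (0 : ℝ)..x, (x - s) * v s / Real.sqrt (D s))) ∧
      (∀ u₂ v₂ : ℝ → ℝ,
        (ContinuousOn u₂ (Ico 0 ε) ∧ ContinuousOn v₂ (Ico 0 ε) ∧
          (∀ x ∈ Ico 0 ε,
            u₂ x = 1 + α * x + j * ∫ s in (0 : ℝ)..x, (x - s) * u₂ s / Real.sqrt (D s)) ∧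
          (∀ x ∈ Ico 0 ε,
            v₂ x = β * x + j * ∫ s in (0 : ℝ)..x, (x - s) * v₂ s / Real.sqrt (D s))) →
        ∀ x ∈ Ico 0 ε, u₂ x = u x ∧ v₂ x = v x) := by
  obtain ⟨u, huc, hue, huu⟩ := Stmt6.master hε hj hDc hDpos hint 1 α
  obtain ⟨v, hvc, hve, hvu⟩ := Stmt6.master hε hj hDc hDpos hint 0 β
  refine ⟨u, v, ⟨huc, hvc, hue, fun x hx => by simpa using hve x hx⟩, ?_⟩
  rintro u₂ v₂ ⟨hu₂c, hv₂c, hu₂e, hv₂e⟩ x hx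
  exact ⟨huu u₂ hu₂c hu₂e x hx,
    hvu v₂ hv₂c (fun y hy => by simpa using hv₂e y hy) x hx⟩
end

section
/- Suppose D ∈ C¹[0,ε) ∩ C²(0,ε) is positive on (0,ε) with D(0) = D'(0) = 0 and satisfies D'' = j(6√D + 2/√D − 4γ), and suppose (U,V) ∈ (C¹[0,ε) ∩ C²(0,ε))² solves U'' = j·U/√D, U(0)=1, U'(0)=0, V'' = j·V/√D, V(0)=0, V'(0)=β with β² = 2jγ. Then U² − 1 − V² = D on [0,ε). -/
open Set MeasureTheory

lemma contraction_step (j : ℝ) (hj : 0 < j) (w p Q k : ℝ → ℝ) (c h : ℝ) (hh : 0 < h)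
    (hw : ContinuousOn w (Icc c (c+h))) (hp : ContinuousOn p (Icc c (c+h)))
    (hQ : ContinuousOn Q (Icc c (c+h)))
    (hk0 : ∀ t, 0 ≤ k t)
    (hkc : ContinuousOn k (Ioc c (c+h)))
    (hki : IntervalIntegrable k volume c (c+h))
    (hw' : ∀ x ∈ Ioo c (c+h), HasDerivAt w (p x) x)
    (hp' : ∀ x ∈ Ioo c (c+h), HasDerivAt p (2*Q x + 2*j*(w x)*(k x)) x)
    (hQ' : ∀ x ∈ Ioo c (c+h), HasDerivAt Q (j*(p x)*(k x)) x)
    (hwc : w c = 0) (hpc : p c = 0) (hQc : Q c = 0)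
    (hsmall : 4*j*h*(∫ t in c..(c+h), k t) < 1) :
    ∀ t ∈ Icc c (c+h), w t = 0 ∧ p t = 0 ∧ Q t = 0 := by
  set I := ∫ t in c..(c+h), k t with hIdef
  have hch : c ≤ c + h := by linarith
  have hI0 : 0 ≤ I := intervalIntegral.integral_nonneg hch (fun u _ => hk0 u)
  -- maximum of |p|
  obtain ⟨x₀, hx₀, hmax⟩ := isCompact_Icc.exists_isMaxOn (α := ℝ) ⟨c, le_refl c, hch⟩
    (continuous_abs.comp_continuousOn hp)
  set P := |p x₀| with hPdef
  have hP0 : 0 ≤ P := abs_nonneg _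
  have hPb : ∀ t ∈ Icc c (c+h), |p t| ≤ P := fun t ht => hmax ht
  -- subinterval integrability of k and partial integrals bounded by I
  have hkI : ∀ t ∈ Icc c (c+h), IntervalIntegrable k volume c t := fun t ht =>
    hki.mono_set (uIcc_subset_uIcc (by rw [uIcc_of_le hch]; exact ⟨le_rfl, hch⟩)
      (by rw [uIcc_of_le hch]; exact ⟨ht.1, ht.2⟩))
  have hkmono : ∀ t ∈ Icc c (c+h), (∫ s in c..t, k s) ≤ I := by
    intro t ht
    have h1 : IntervalIntegrable k volume t (c+h) :=
      hki.mono_set (uIcc_subset_uIcc (by rw [uIcc_of_le hch]; exact ⟨ht.1, ht.2⟩)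
        (by rw [uIcc_of_le hch]; exact ⟨hch, le_rfl⟩))
    have := intervalIntegral.integral_add_adjacent_intervals (hkI t ht) h1
    have h2 : 0 ≤ ∫ s in t..(c+h), k s := intervalIntegral.integral_nonneg ht.2 (fun u _ => hk0 u)
    rw [hIdef, ← this]
    linarith
  have hIccsub : ∀ t ∈ Icc c (c+h), Icc c t ⊆ Icc c (c+h) := fun t ht =>
    Icc_subset_Icc le_rfl ht.2
  have hIoosub : ∀ t ∈ Icc c (c+h), Ioo c t ⊆ Ioo c (c+h) := fun t ht =>
    Ioo_subset_Ioo le_rfl ht.2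
  -- FTC for w
  have wt_eq : ∀ t ∈ Icc c (c+h), w t = ∫ s in c..t, p s := by
    intro t ht
    have := intervalIntegral.integral_eq_sub_of_hasDeriv_right_of_le ht.1
      (hw.mono (hIccsub t ht))
      (fun x hx => ((hw' x (hIoosub t ht hx)).hasDerivWithinAt))
      ((hp.mono (hIccsub t ht)).intervalIntegrable_of_Icc ht.1)
    rw [this, hwc, sub_zero]
  have hwb : ∀ t ∈ Icc c (c+h), |w t| ≤ P * h := by
    intro t ht
    rw [wt_eq t ht]
    have : ‖∫ s in c..t, p s‖ ≤ P * |t - c| := by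
      apply intervalIntegral.norm_integral_le_of_norm_le_const
      intro x hx
      rw [uIoc_of_le ht.1] at hx
      exact hPb x ⟨le_of_lt hx.1, le_trans hx.2 ht.2⟩
    rw [Real.norm_eq_abs] at this
    have h2 : |t - c| ≤ h := by rw [abs_of_nonneg (by linarith [ht.1])]; linarith [ht.2]
    nlinarith
  -- integrability of j*p*k on [c,t]
  have hpkI : ∀ t ∈ Icc c (c+h), IntervalIntegrable (fun s => j * p s * k s) volume c t := by
    intro t ht
    rw [intervalIntegrable_iff_integrableOn_Ioc_of_le ht.1]
    have hmeas : AEStronglyMeasurable (fun s => j * p s * k s) (volume.restrict (Ioc c t)) := by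
      apply ContinuousOn.aestronglyMeasurable _ measurableSet_Ioc
      exact (continuousOn_const.mul ((hp.mono (hIccsub t ht)).mono Ioc_subset_Icc_self)).mul
        (hkc.mono (Ioc_subset_Ioc le_rfl ht.2))
    have hgint : IntegrableOn (fun s => (j * P) * k s) (Ioc c t) volume :=
      ((intervalIntegrable_iff_integrableOn_Ioc_of_le ht.1).1 (hkI t ht)).const_mul _
    apply Integrable.mono' hgint hmeas
    rw [ae_restrict_iff' measurableSet_Ioc]
    filter_upwards with s hs
    have hsI : s ∈ Icc c (c+h) := ⟨le_of_lt hs.1, le_trans hs.2 ht.2⟩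
    rw [Real.norm_eq_abs, abs_mul, abs_mul, abs_of_pos hj, abs_of_nonneg (hk0 s)]
    have h9 : |p s| * k s ≤ P * k s := mul_le_mul_of_nonneg_right (hPb s hsI) (hk0 s)
    have h10 := mul_le_mul_of_nonneg_left h9 hj.le
    linarith
  -- FTC for Q
  have Qt_eq : ∀ t ∈ Icc c (c+h), Q t = ∫ s in c..t, j * p s * k s := by
    intro t ht
    have := intervalIntegral.integral_eq_sub_of_hasDeriv_right_of_le ht.1
      (hQ.mono (hIccsub t ht))
      (fun x hx => ((hQ' x (hIoosub t ht hx)).hasDerivWithinAt))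
      (hpkI t ht)
    rw [this, hQc, sub_zero]
  have hQb : ∀ t ∈ Icc c (c+h), |Q t| ≤ j * P * I := by
    intro t ht
    rw [Qt_eq t ht]
    have hb : ‖∫ s in c..t, j * p s * k s‖ ≤ |∫ s in c..t, (j * P) * k s| := by
      apply intervalIntegral.norm_integral_le_abs_of_norm_le _ ((hkI t ht).const_mul _)
      rw [ae_restrict_iff' measurableSet_uIoc]
      filter_upwards with s hs
      rw [uIoc_of_le ht.1] at hs
      have hsI : s ∈ Icc c (c+h) := ⟨le_of_lt hs.1, le_trans hs.2 ht.2⟩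
      rw [Real.norm_eq_abs, abs_mul, abs_mul, abs_of_pos hj, abs_of_nonneg (hk0 s)]
      have h9 : |p s| * k s ≤ P * k s := mul_le_mul_of_nonneg_right (hPb s hsI) (hk0 s)
      have h10 := mul_le_mul_of_nonneg_left h9 hj.le
      linarith
    rw [Real.norm_eq_abs] at hb
    have heq : (∫ s in c..t, (j * P) * k s) = (j*P) * ∫ s in c..t, k s :=
      intervalIntegral.integral_const_mul _ _
    have hknn : 0 ≤ ∫ s in c..t, k s := intervalIntegral.integral_nonneg ht.1 (fun u _ => hk0 u)
    have a1 : 0 ≤ j * P := mul_nonneg hj.le hP0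
    rw [heq, abs_of_nonneg (mul_nonneg a1 hknn)] at hb
    have b1 := mul_le_mul_of_nonneg_left (hkmono t ht) a1
    linarith
  -- integrability of p-integrand and FTC for p, bound
  have hpb2 : ∀ t ∈ Icc c (c+h), |p t| ≤ 2*j*P*I*h + 2*j*P*h*I := by
    intro t ht
    have hint : IntervalIntegrable (fun s => 2*Q s + 2*j*(w s)*(k s)) volume c t := by
      apply IntervalIntegrable.add
      · exact (continuousOn_const.mul ((hQ.mono (hIccsub t ht)))).intervalIntegrable_of_Icc ht.1
      · rw [intervalIntegrable_iff_integrableOn_Ioc_of_le ht.1]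
        have hmeas : AEStronglyMeasurable (fun s => 2*j*(w s)*(k s))
            (volume.restrict (Ioc c t)) := by
          apply ContinuousOn.aestronglyMeasurable _ measurableSet_Ioc
          exact (continuousOn_const.mul ((hw.mono (hIccsub t ht)).mono Ioc_subset_Icc_self)).mul
            (hkc.mono (Ioc_subset_Ioc le_rfl ht.2))
        have hgint : IntegrableOn (fun s => (2*j*(P*h)) * k s) (Ioc c t) volume :=
          ((intervalIntegrable_iff_integrableOn_Ioc_of_le ht.1).1 (hkI t ht)).const_mul _
        apply Integrable.mono' hgint hmeas
        rw [ae_restrict_iff' measurableSet_Ioc]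
        filter_upwards with s hs
        have hsI : s ∈ Icc c (c+h) := ⟨le_of_lt hs.1, le_trans hs.2 ht.2⟩
        rw [Real.norm_eq_abs, abs_mul, abs_mul, abs_of_nonneg (by linarith : (0:ℝ) ≤ 2*j),
          abs_of_nonneg (hk0 s)]
        have h9 : |w s| * k s ≤ (P*h) * k s := mul_le_mul_of_nonneg_right (hwb s hsI) (hk0 s)
        have h10 := mul_le_mul_of_nonneg_left h9 (by linarith : (0:ℝ) ≤ 2*j)
        linarith
    have pt_eq : p t = ∫ s in c..t, (2*Q s + 2*j*(w s)*(k s)) := by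
      have := intervalIntegral.integral_eq_sub_of_hasDeriv_right_of_le ht.1
        (hp.mono (hIccsub t ht))
        (fun x hx => ((hp' x (hIoosub t ht hx)).hasDerivWithinAt))
        hint
      rw [this, hpc, sub_zero]
    rw [pt_eq]
    have hgI : IntervalIntegrable (fun s => 2*(j*P*I) + 2*j*(P*h)*(k s)) volume c t :=
      (intervalIntegrable_const (c := 2*(j*P*I))).add ((hkI t ht).const_mul _)
    have hb : ‖∫ s in c..t, (2*Q s + 2*j*(w s)*(k s))‖ ≤
        |∫ s in c..t, (2*(j*P*I) + 2*j*(P*h)*(k s))| := by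
      apply intervalIntegral.norm_integral_le_abs_of_norm_le _ hgI
      rw [ae_restrict_iff' measurableSet_uIoc]
      filter_upwards with s hs
      rw [uIoc_of_le ht.1] at hs
      have hsI : s ∈ Icc c (c+h) := ⟨le_of_lt hs.1, le_trans hs.2 ht.2⟩
      rw [Real.norm_eq_abs]
      have h1 := abs_le.mp (hQb s hsI)
      have h2 := abs_le.mp (hwb s hsI)
      have hw1 := mul_le_mul_of_nonneg_left
        (mul_le_mul_of_nonneg_right h2.2 (hk0 s)) (by linarith : (0:ℝ) ≤ 2*j)
      have hw2 := mul_le_mul_of_nonneg_left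
        (mul_le_mul_of_nonneg_right h2.1 (hk0 s)) (by linarith : (0:ℝ) ≤ 2*j)
      rw [abs_le]
      constructor <;> nlinarith [hw1, hw2, h1.1, h1.2]
    rw [Real.norm_eq_abs] at hb
    have heq : (∫ s in c..t, (2*(j*P*I) + 2*j*(P*h)*(k s)))
        = 2*(j*P*I)*(t-c) + 2*j*(P*h)*(∫ s in c..t, k s) := by
      rw [intervalIntegral.integral_add (intervalIntegrable_const (c := 2*(j*P*I)))
        ((hkI t ht).const_mul _),
        intervalIntegral.integral_const, intervalIntegral.integral_const_mul]
      simp only [smul_eq_mul]; ring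
    rw [heq] at hb
    have hknn : 0 ≤ ∫ s in c..t, k s := intervalIntegral.integral_nonneg ht.1 (fun u _ => hk0 u)
    have h5 := hkmono t ht
    have h6 : c ≤ t := ht.1
    have h7 : t ≤ c + h := ht.2
    have a1 : 0 ≤ j*P*I := mul_nonneg (mul_nonneg hj.le hP0) hI0
    have a2 : 0 ≤ j*(P*h) := mul_nonneg hj.le (mul_nonneg hP0 hh.le)
    have t1 : 0 ≤ 2*(j*P*I)*(t-c) := by nlinarith [mul_nonneg a1 (by linarith : (0:ℝ) ≤ t - c)]
    have t2 : 0 ≤ 2*j*(P*h)*(∫ s in c..t, k s) := by nlinarith [mul_nonneg a2 hknn]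
    have b1 := mul_le_mul_of_nonneg_left (show t - c ≤ h by linarith) a1
    have b2 := mul_le_mul_of_nonneg_left h5 a2
    have hb2 : |∫ s in c..t, (2*Q s + 2*j*(w s)*(k s))|
        ≤ 2*(j*P*I)*(t-c) + 2*j*(P*h)*(∫ s in c..t, k s) :=
      le_trans hb (le_of_eq (abs_of_nonneg (by linarith)))
    linarith [hb2, b1, b2]
  -- conclude P = 0
  have hPzero : P = 0 := by
    by_contra hne
    have hPpos : 0 < P := lt_of_le_of_ne hP0 (Ne.symm hne)
    have c1 := mul_lt_mul_of_pos_left hsmall hPpos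
    have c2 := hpb2 x₀ hx₀
    rw [← hPdef] at c2
    nlinarith [c1, c2]
  have hpzero : ∀ t ∈ Icc c (c+h), p t = 0 := by
    intro t ht
    have h1 := hPb t ht
    rw [hPzero] at h1
    exact abs_eq_zero.mp (le_antisymm h1 (abs_nonneg _))
  intro t ht
  refine ⟨?_, hpzero t ht, ?_⟩
  · rw [wt_eq t ht]
    rw [intervalIntegral.integral_congr (g := fun _ => (0:ℝ)) ?_]
    · simp
    · intro s hs
      rw [uIcc_of_le ht.1] at hs
      exact hpzero s ⟨hs.1, le_trans hs.2 ht.2⟩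
  · rw [Qt_eq t ht]
    rw [intervalIntegral.integral_congr (g := fun _ => (0:ℝ)) ?_]
    · simp
    · intro s hs
      rw [uIcc_of_le ht.1] at hs
      show j * p s * k s = 0
      rw [hpzero s ⟨hs.1, le_trans hs.2 ht.2⟩]
      ring

lemma zero_at_endpoint {f : ℝ → ℝ} {c : ℝ} (hc : 0 < c)
    (hf : ContinuousWithinAt f (Ico 0 c) c) (h0 : ∀ t ∈ Ico 0 c, f t = 0) : f c = 0 := by
  have hne : (nhdsWithin c (Ico 0 c)).NeBot := by
    rw [← mem_closure_iff_nhdsWithin_neBot, closure_Ico hc.ne]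
    exact ⟨hc.le, le_rfl⟩
  have h1 : Filter.Tendsto f (nhdsWithin c (Ico 0 c)) (nhds (f c)) := hf
  have h2 : Filter.Tendsto f (nhdsWithin c (Ico 0 c)) (nhds 0) := by
    apply Filter.Tendsto.congr' _ tendsto_const_nhds
    filter_upwards [self_mem_nhdsWithin] with t ht using (h0 t ht).symm
  exact tendsto_nhds_unique h1 h2

set_option maxHeartbeats 1600000 in
theorem stmt_7 (ε j γ β : ℝ) (hε : 0 < ε) (hj : 0 < j) (hγ : 0 ≤ γ)
    (hβ : β ^ 2 = 2 * j * γ)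
    (D D' U U' V V' : ℝ → ℝ)
    (hD' : ∀ x ∈ Ico 0 ε, HasDerivWithinAt D (D' x) (Ico 0 ε) x)
    (hD'c : ContinuousOn D' (Ico 0 ε))
    (hDpos : ∀ x ∈ Ioo 0 ε, 0 < D x)
    (hD0 : D 0 = 0) (hD'0 : D' 0 = 0)
    (hD'' : ∀ x ∈ Ioo 0 ε,
      HasDerivAt D' (j * (6 * Real.sqrt (D x) + 2 / Real.sqrt (D x) - 4 * γ)) x)
    (hU' : ∀ x ∈ Ico 0 ε, HasDerivWithinAt U (U' x) (Ico 0 ε) x)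
    (hU'c : ContinuousOn U' (Ico 0 ε))
    (hU'' : ∀ x ∈ Ioo 0 ε, HasDerivAt U' (j * U x / Real.sqrt (D x)) x)
    (hV' : ∀ x ∈ Ico 0 ε, HasDerivWithinAt V (V' x) (Ico 0 ε) x)
    (hV'c : ContinuousOn V' (Ico 0 ε))
    (hV'' : ∀ x ∈ Ioo 0 ε, HasDerivAt V' (j * V x / Real.sqrt (D x)) x)
    (hU0 : U 0 = 1) (hU'0 : U' 0 = 0) (hV0 : V 0 = 0) (hV'0 : V' 0 = β) :
    ∀ x ∈ Ico 0 ε, U x ^ 2 - 1 - V x ^ 2 = D x := by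
  -- basic continuity
  have hDc : ContinuousOn D (Ico 0 ε) :=
    fun x hx => ((hD' x hx).differentiableWithinAt).continuousWithinAt
  have hUc : ContinuousOn U (Ico 0 ε) :=
    fun x hx => ((hU' x hx).differentiableWithinAt).continuousWithinAt
  have hVc : ContinuousOn V (Ico 0 ε) :=
    fun x hx => ((hV' x hx).differentiableWithinAt).continuousWithinAt
  have hsqDc : ContinuousOn (fun t => Real.sqrt (D t)) (Ico 0 ε) :=
    Real.continuous_sqrt.comp_continuousOn hDc
  have hDnn : ∀ y ∈ Ico 0 ε, 0 ≤ D y := by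
    intro y hy
    rcases eq_or_lt_of_le hy.1 with h | h
    · rw [← h, hD0]
    · exact (hDpos y ⟨h, hy.2⟩).le
  have hsqpos : ∀ y ∈ Ioo 0 ε, 0 < Real.sqrt (D y) :=
    fun y hy => Real.sqrt_pos.mpr (hDpos y hy)
  -- interior derivatives
  have hDd : ∀ y ∈ Ioo 0 ε, HasDerivAt D (D' y) y :=
    fun y hy => (hD' y ⟨hy.1.le, hy.2⟩).hasDerivAt (Ico_mem_nhds hy.1 hy.2)
  have hUd : ∀ y ∈ Ioo 0 ε, HasDerivAt U (U' y) y :=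
    fun y hy => (hU' y ⟨hy.1.le, hy.2⟩).hasDerivAt (Ico_mem_nhds hy.1 hy.2)
  have hVd : ∀ y ∈ Ioo 0 ε, HasDerivAt V (V' y) y :=
    fun y hy => (hV' y ⟨hy.1.le, hy.2⟩).hasDerivAt (Ico_mem_nhds hy.1 hy.2)
  -- the three auxiliary functions
  set k : ℝ → ℝ := fun t => (Real.sqrt (D t))⁻¹ with hkdef
  set w : ℝ → ℝ := fun t => U t ^ 2 - 1 - V t ^ 2 - D t with hwdef
  set p : ℝ → ℝ := fun t => 2 * U t * U' t - 2 * V t * V' t - D' t with hpdef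
  set Q : ℝ → ℝ := fun t => U' t ^ 2 - V' t ^ 2 + 2 * j * γ - 2 * j * Real.sqrt (D t) with hQdef
  have hk0 : ∀ t, 0 ≤ k t := fun t => inv_nonneg.mpr (Real.sqrt_nonneg _)
  have hkIoo : ContinuousOn k (Ioo 0 ε) := by
    rw [hkdef]
    exact (hsqDc.mono Ioo_subset_Ico_self).inv₀ fun y hy => (hsqpos y hy).ne'
  have hwcont : ContinuousOn w (Ico 0 ε) := by
    rw [hwdef]
    exact (((hUc.pow 2).sub continuousOn_const).sub (hVc.pow 2)).sub hDc
  have hpcont : ContinuousOn p (Ico 0 ε) := by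
    rw [hpdef]
    exact (((continuousOn_const.mul hUc).mul hU'c).sub
      ((continuousOn_const.mul hVc).mul hV'c)).sub hD'c
  have hQcont : ContinuousOn Q (Ico 0 ε) := by
    rw [hQdef]
    exact (((hU'c.pow 2).sub (hV'c.pow 2)).add continuousOn_const).sub
      (continuousOn_const.mul hsqDc)
  have hw0 : w 0 = 0 := by rw [hwdef]; simp [hU0, hV0, hD0]
  have hp0 : p 0 = 0 := by rw [hpdef]; simp [hU0, hU'0, hV0, hV'0, hD'0]
  have hQ0 : Q 0 = 0 := by
    rw [hQdef]
    simp only [hU'0, hV'0, hD0, Real.sqrt_zero, mul_zero]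
    nlinarith [hβ]
  -- interior derivatives of w, p, Q
  have hwd : ∀ y ∈ Ioo 0 ε, HasDerivAt w (p y) y := by
    intro y hy
    rw [hwdef, hpdef]
    have h := ((((hUd y hy).pow 2).sub_const 1).sub ((hVd y hy).pow 2)).sub (hDd y hy)
    convert h using 1
    · rfl
    · rfl
    · rfl
    ring
  have hQd : ∀ y ∈ Ioo 0 ε, HasDerivAt Q (j * p y * k y) y := by
    intro y hy
    have hsne : Real.sqrt (D y) ≠ 0 := (hsqpos y hy).ne'
    rw [hQdef, hpdef, hkdef]
    have h := ((((hU'' y hy).pow 2).sub ((hV'' y hy).pow 2)).add_const (2*j*γ)).sub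
      (((hDd y hy).sqrt (hDpos y hy).ne').const_mul (2*j))
    convert h using 1
    · rfl
    · rfl
    · rfl
    have hs := hsqpos y hy
    field_simp
    ring
  have hpd : ∀ y ∈ Ioo 0 ε, HasDerivAt p (2 * Q y + 2 * j * w y * k y) y := by
    intro y hy
    have hs := hsqpos y hy
    have hDne : D y ≠ 0 := (hDpos y hy).ne'
    rw [hpdef, hQdef, hwdef, hkdef]
    have h := ((((hUd y hy).const_mul 2).mul (hU'' y hy)).sub
      (((hVd y hy).const_mul 2).mul (hV'' y hy))).sub (hD'' y hy)
    convert h using 1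
    · rfl
    · rfl
    · rfl
    show 2 * (U' y ^ 2 - V' y ^ 2 + 2*j*γ - 2*j*Real.sqrt (D y))
      + 2 * j * (U y ^ 2 - 1 - V y ^ 2 - D y) * (Real.sqrt (D y))⁻¹ = _
    have hss : Real.sqrt (D y) ^ 2 = D y := Real.sq_sqrt (hDnn y ⟨hy.1.le, hy.2⟩)
    set s := Real.sqrt (D y) with hsdef
    rw [← hss]
    field_simp
    ring
  -- find δ₁ where D is small
  obtain ⟨δ₀, hδ₀pos, hδ₀⟩ : ∃ δ > (0:ℝ), ∀ y ∈ Metric.ball 0 δ ∩ Ico 0 ε,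
      D y < ((4*γ+1)⁻¹)^2 := by
    have hev : ∀ᶠ y in nhdsWithin 0 (Ico 0 ε), D y < ((4*γ+1)⁻¹)^2 :=
      Filter.Tendsto.eventually_lt_const
        (show D 0 < ((4*γ+1)⁻¹)^2 by rw [hD0]; positivity) (hDc 0 ⟨le_rfl, hε⟩)
    obtain ⟨δ, hδ, hsub⟩ := Metric.mem_nhdsWithin_iff.mp hev
    exact ⟨δ, hδ, fun y hy => hsub hy⟩
  set δ₁ := min δ₀ ε with hδ₁def
  have hδ₁pos : 0 < δ₁ := lt_min hδ₀pos hε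
  have hδ₁ε : δ₁ ≤ ε := min_le_right _ _
  have hIcoδ : Ico 0 δ₁ ⊆ Ico 0 ε := Ico_subset_Ico le_rfl hδ₁ε
  have hIooδ : Ioo 0 δ₁ ⊆ Ioo 0 ε := Ioo_subset_Ioo le_rfl hδ₁ε
  have hDsmall : ∀ y ∈ Ico 0 δ₁, D y < ((4*γ+1)⁻¹)^2 := by
    intro y hy
    apply hδ₀ y
    refine ⟨?_, hIcoδ hy⟩
    rw [Metric.mem_ball, Real.dist_eq, sub_zero, abs_of_nonneg hy.1]
    exact lt_of_lt_of_le hy.2 (min_le_left _ _)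
  have hslt : ∀ y ∈ Ioo 0 δ₁, Real.sqrt (D y) < (4*γ+1)⁻¹ := by
    intro y hy
    have h1 := hDsmall y ⟨hy.1.le, hy.2⟩
    have h2 : (0:ℝ) < (4*γ+1)⁻¹ := by positivity
    calc Real.sqrt (D y) < Real.sqrt (((4*γ+1)⁻¹)^2) :=
          Real.sqrt_lt_sqrt (hDnn y (hIcoδ ⟨hy.1.le, hy.2⟩)) h1
      _ = (4*γ+1)⁻¹ := Real.sqrt_sq h2.le
  have hD''ge : ∀ y ∈ Ioo 0 δ₁,
      j / Real.sqrt (D y) ≤ j * (6*Real.sqrt (D y) + 2/Real.sqrt (D y) - 4*γ) := by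
    intro y hy
    have hs := hsqpos y (hIooδ hy)
    have h1 := hslt y hy
    have hkey : Real.sqrt (D y) * (4*γ+1) < 1 := by
      have h2 : (0:ℝ) < 4*γ+1 := by positivity
      calc Real.sqrt (D y) * (4*γ+1) < (4*γ+1)⁻¹ * (4*γ+1) := mul_lt_mul_of_pos_right h1 h2
        _ = 1 := inv_mul_cancel₀ h2.ne'
    rw [← sub_nonneg]
    have hexp : j * (6*Real.sqrt (D y) + 2/Real.sqrt (D y) - 4*γ) - j / Real.sqrt (D y)
        = (j * (6*Real.sqrt (D y)^2 + 1 - 4*γ*Real.sqrt (D y))) / Real.sqrt (D y) := by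
      field_simp
      ring
    rw [hexp]
    apply div_nonneg _ hs.le
    have h3 : 0 ≤ 6*Real.sqrt (D y)^2 + 1 - 4*γ*Real.sqrt (D y) := by
      nlinarith [sq_nonneg (Real.sqrt (D y)), hkey, hs]
    exact mul_nonneg hj.le h3
  have hD''pos : ∀ y ∈ Ioo 0 δ₁, 0 < j * (6*Real.sqrt (D y) + 2/Real.sqrt (D y) - 4*γ) := by
    intro y hy
    have hs := hsqpos y (hIooδ hy)
    have h2 := hD''ge y hy
    have h3 : 0 < j / Real.sqrt (D y) := div_pos hj hs
    linarith
  have hD'pos : ∀ y ∈ Ioo 0 δ₁, 0 < D' y := by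
    have hmono : StrictMonoOn D' (Ico 0 δ₁) := by
      apply strictMonoOn_of_deriv_pos (convex_Ico 0 δ₁) (hD'c.mono hIcoδ)
      intro y hy
      rw [interior_Ico] at hy
      rw [(hD'' y (hIooδ hy)).deriv]
      exact hD''pos y hy
    intro y hy
    have h := hmono ⟨le_rfl, hδ₁pos⟩ ⟨hy.1.le, hy.2⟩ hy.1
    rwa [hD'0] at h
  -- F := D'^2/2 - 2j√D is monotone on [0, δ₁)
  have hFlb : ∀ y ∈ Ico 0 δ₁, 4*j*Real.sqrt (D y) ≤ D' y ^ 2 := by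
    have hFd : ∀ y ∈ Ioo 0 δ₁, HasDerivAt (fun t => D' t ^ 2 / 2 - 2*j*Real.sqrt (D t))
        (D' y * (j * (6*Real.sqrt (D y) + 2/Real.sqrt (D y) - 4*γ))
          - j * D' y / Real.sqrt (D y)) y := by
      intro y hy
      have h := (((hD'' y (hIooδ hy)).pow 2).div_const 2).sub
        (((hDd y (hIooδ hy)).sqrt (hDpos y (hIooδ hy)).ne').const_mul (2*j))
      convert h using 1
      · rfl
      · rfl
      · rfl
      have hs := hsqpos y (hIooδ hy)
      field_simp
      ring
    have hFmono : MonotoneOn (fun t => D' t ^ 2 / 2 - 2*j*Real.sqrt (D t)) (Ico 0 δ₁) := by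
      apply monotoneOn_of_deriv_nonneg (convex_Ico 0 δ₁)
      · exact (((hD'c.mono hIcoδ).pow 2).div_const 2).sub
          (continuousOn_const.mul (hsqDc.mono hIcoδ))
      · rw [interior_Ico]
        intro y hy
        exact (hFd y hy).differentiableAt.differentiableWithinAt
      · rw [interior_Ico]
        intro y hy
        rw [(hFd y hy).deriv]
        have h1 := hD''ge y hy
        have h2 := (hD'pos y hy).le
        have h3 := mul_le_mul_of_nonneg_left h1 h2
        have h4 : D' y * (j / Real.sqrt (D y)) = j * D' y / Real.sqrt (D y) := by ring
        linarith
    intro y hy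
    have h5 := hFmono ⟨le_rfl, hδ₁pos⟩ hy hy.1
    simp only [hD'0, hD0, Real.sqrt_zero, mul_zero, sub_zero] at h5
    norm_num at h5
    nlinarith [h5]
  have hsjpos : (0:ℝ) < Real.sqrt j := Real.sqrt_pos.mpr hj
  have ha : (0:ℝ) < 3/2*Real.sqrt j := by nlinarith [hsjpos]
  have hGlb : ∀ y ∈ Ico 0 δ₁, 3/2*Real.sqrt j * y ≤ D y ^ ((3:ℝ)/4) := by
    have hGd : ∀ y ∈ Ioo 0 δ₁, HasDerivAt (fun t => D t ^ ((3:ℝ)/4) - 3/2*Real.sqrt j * t)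
        (D' y * ((3:ℝ)/4) * D y ^ ((3:ℝ)/4 - 1) - 3/2*Real.sqrt j) y := by
      intro y hy
      have h1 := (hDd y (hIooδ hy)).rpow_const (p := (3:ℝ)/4) (Or.inl (hDpos y (hIooδ hy)).ne')
      have h2 := (hasDerivAt_id y).const_mul (3/2*Real.sqrt j)
      have h3 := h1.sub h2
      convert h3 using 1
      · rfl
      · rfl
      · rfl
      ring
    have hGmono : MonotoneOn (fun t => D t ^ ((3:ℝ)/4) - 3/2*Real.sqrt j * t) (Ico 0 δ₁) := by
      apply monotoneOn_of_deriv_nonneg (convex_Ico 0 δ₁)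
      · apply ContinuousOn.sub
        · exact (hDc.mono hIcoδ).rpow_const (fun y hy => Or.inr (by norm_num))
        · exact continuousOn_const.mul continuousOn_id
      · rw [interior_Ico]
        intro y hy
        exact (hGd y hy).differentiableAt.differentiableWithinAt
      · rw [interior_Ico]
        intro y hy
        rw [(hGd y hy).deriv]
        have hDy := hDpos y (hIooδ hy)
        have hr : (0:ℝ) < D y ^ ((1:ℝ)/4) := Real.rpow_pos_of_pos hDy _
        have hrr : (D y ^ ((1:ℝ)/4))^2 = Real.sqrt (D y) := by
          rw [← Real.rpow_natCast (D y ^ ((1:ℝ)/4)) 2, ← Real.rpow_mul hDy.le,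
            Real.sqrt_eq_rpow]
          norm_num
        have hexp : D y ^ ((3:ℝ)/4 - 1) = (D y ^ ((1:ℝ)/4))⁻¹ := by
          rw [show (3:ℝ)/4 - 1 = -(1/4) by norm_num, Real.rpow_neg hDy.le]
        have hd := hD'pos y hy
        have hF := hFlb y ⟨hy.1.le, hy.2⟩
        have hsj : Real.sqrt j ^ 2 = j := Real.sq_sqrt hj.le
        have hge : 2*Real.sqrt j * (D y ^ ((1:ℝ)/4)) ≤ D' y := by
          nlinarith [hF, hrr, hsj, hr, hd, hsjpos]
        rw [hexp]
        have heq2 : D' y * ((3:ℝ)/4) * (D y ^ ((1:ℝ)/4))⁻¹ - 3/2*Real.sqrt j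
            = (3/4) * (D' y - 2*Real.sqrt j * (D y ^ ((1:ℝ)/4))) * (D y ^ ((1:ℝ)/4))⁻¹ := by
          field_simp
          ring
        rw [heq2]
        apply mul_nonneg (mul_nonneg (by norm_num) (by linarith)) (inv_nonneg.mpr hr.le)
    intro y hy
    have h5 := hGmono ⟨le_rfl, hδ₁pos⟩ hy hy.1
    simp only [hD0, mul_zero] at h5
    rw [Real.zero_rpow (by norm_num : ((3:ℝ)/4) ≠ 0)] at h5
    linarith
  -- bound on k near 0
  set Ck : ℝ := ((3/2*Real.sqrt j) ^ ((2:ℝ)/3))⁻¹ with hCkdef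
  have hCk : 0 < Ck := inv_pos.mpr (Real.rpow_pos_of_pos ha _)
  have hkb : ∀ y ∈ Ioo 0 δ₁, k y ≤ Ck * (y ^ ((2:ℝ)/3))⁻¹ := by
    intro y hy
    have h1 := hGlb y ⟨hy.1.le, hy.2⟩
    have h2 : (3/2*Real.sqrt j * y) ^ ((2:ℝ)/3) ≤ (D y ^ ((3:ℝ)/4)) ^ ((2:ℝ)/3) :=
      Real.rpow_le_rpow (mul_nonneg ha.le hy.1.le) h1 (by norm_num)
    have hDy := hDpos y (hIooδ hy)
    have h3 : (D y ^ ((3:ℝ)/4)) ^ ((2:ℝ)/3) = Real.sqrt (D y) := by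
      rw [← Real.rpow_mul hDy.le, Real.sqrt_eq_rpow]
      norm_num
    have h4 : (3/2*Real.sqrt j * y) ^ ((2:ℝ)/3)
        = (3/2*Real.sqrt j) ^ ((2:ℝ)/3) * y ^ ((2:ℝ)/3) := Real.mul_rpow ha.le hy.1.le
    rw [h3, h4] at h2
    have h6 : 0 < (3/2*Real.sqrt j) ^ ((2:ℝ)/3) * y ^ ((2:ℝ)/3) :=
      mul_pos (Real.rpow_pos_of_pos ha _) (Real.rpow_pos_of_pos hy.1 _)
    have h7 : (Real.sqrt (D y))⁻¹ ≤ ((3/2*Real.sqrt j) ^ ((2:ℝ)/3) * y ^ ((2:ℝ)/3))⁻¹ :=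
      inv_anti₀ h6 h2
    rw [hkdef]
    show (Real.sqrt (D y))⁻¹ ≤ _
    rw [hCkdef, ← mul_inv]
    exact h7
  -- integrability of k on [0, b] for b < δ₁
  have hg0int : ∀ b : ℝ, IntervalIntegrable (fun t => Ck * t ^ (-(2:ℝ)/3)) volume 0 b :=
    fun b => (intervalIntegral.intervalIntegrable_rpow' (by norm_num)).const_mul Ck
  have hkint0 : ∀ b, 0 < b → b < δ₁ → IntervalIntegrable k volume 0 b := by
    intro b hb hbδ
    rw [intervalIntegrable_iff_integrableOn_Ioc_of_le hb.le]
    have hgint : IntegrableOn (fun t => Ck * t ^ (-(2:ℝ)/3)) (Ioc 0 b) volume := by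
      rw [← intervalIntegrable_iff_integrableOn_Ioc_of_le hb.le]
      exact hg0int b
    apply Integrable.mono' hgint
    · apply ContinuousOn.aestronglyMeasurable _ measurableSet_Ioc
      apply hkIoo.mono
      intro t ht
      exact ⟨ht.1, lt_of_le_of_lt ht.2 (lt_of_lt_of_le hbδ hδ₁ε)⟩
    · rw [ae_restrict_iff' measurableSet_Ioc]
      filter_upwards with t ht
      have h1 := hkb t ⟨ht.1, lt_of_le_of_lt ht.2 hbδ⟩
      rw [Real.norm_eq_abs, abs_of_nonneg (hk0 t)]
      calc k t ≤ Ck * (t ^ ((2:ℝ)/3))⁻¹ := h1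
        _ = Ck * t ^ (-(2:ℝ)/3) := by
            rw [show (-(2:ℝ)/3) = -((2:ℝ)/3) by norm_num, Real.rpow_neg ht.1.le]
  -- integral bound near 0
  have hIb : ∀ b, 0 < b → b ≤ 1 → b < δ₁ → (∫ t in (0:ℝ)..b, k t) ≤ 3*Ck := by
    intro b hb hb1 hbδ
    have h1 : (∫ t in (0:ℝ)..b, k t) ≤ ∫ t in (0:ℝ)..b, Ck * t ^ (-(2:ℝ)/3) := by
      apply intervalIntegral.integral_mono_on hb.le (hkint0 b hb hbδ) (hg0int b)
      intro t ht
      rcases eq_or_lt_of_le ht.1 with h | h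
      · rw [hkdef]
        show (Real.sqrt (D t))⁻¹ ≤ _
        rw [← h, hD0, Real.sqrt_zero, inv_zero,
          Real.zero_rpow (by norm_num : (-(2:ℝ)/3) ≠ 0)]
        norm_num
      · have h2 := hkb t ⟨h, lt_of_le_of_lt ht.2 hbδ⟩
        calc k t ≤ Ck * (t ^ ((2:ℝ)/3))⁻¹ := h2
          _ = Ck * t ^ (-(2:ℝ)/3) := by
              rw [show (-(2:ℝ)/3) = -((2:ℝ)/3) by norm_num, Real.rpow_neg h.le]
    have h2 : (∫ t in (0:ℝ)..b, Ck * t ^ (-(2:ℝ)/3)) = Ck * (3 * b ^ ((1:ℝ)/3)) := by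
      rw [intervalIntegral.integral_const_mul, integral_rpow (Or.inl (by norm_num))]
      rw [show (-(2:ℝ)/3 + 1) = (1:ℝ)/3 by norm_num,
        Real.zero_rpow (by norm_num : ((1:ℝ)/3) ≠ 0)]
      ring
    have h3 : b ^ ((1:ℝ)/3) ≤ 1 := Real.rpow_le_one hb.le hb1 (by norm_num)
    calc (∫ t in (0:ℝ)..b, k t) ≤ Ck * (3*b^((1:ℝ)/3)) := by rw [← h2]; exact h1
      _ ≤ 3*Ck := by nlinarith [hCk, h3, Real.rpow_nonneg hb.le ((1:ℝ)/3)]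
  -- main argument
  intro x hx
  rcases eq_or_lt_of_le hx.1 with hx0 | hx0
  · rw [← hx0, hU0, hV0, hD0]; norm_num
  · have hxε : x < ε := hx.2
    set S : Set ℝ := {b | b ∈ Icc 0 x ∧ ∀ t ∈ Icc 0 b, w t = 0 ∧ p t = 0 ∧ Q t = 0} with hSdef
    have hS0 : (0:ℝ) ∈ S := by
      constructor
      · exact ⟨le_rfl, hx0.le⟩
      · intro t ht
        have ht0 : t = 0 := le_antisymm ht.2 ht.1
        rw [ht0]
        exact ⟨hw0, hp0, hQ0⟩
    have hSbdd : BddAbove S := ⟨x, fun b hb => hb.1.2⟩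
    have hSne : S.Nonempty := ⟨0, hS0⟩
    set c := sSup S with hcdef
    have hc0 : 0 ≤ c := le_csSup hSbdd hS0
    have hcx : c ≤ x := csSup_le hSne (fun b hb => hb.1.2)
    have hcε : c < ε := lt_of_le_of_lt hcx hxε
    have hcmem : c ∈ Ico 0 ε := ⟨hc0, hcε⟩
    have hless : ∀ t ∈ Ico 0 c, w t = 0 ∧ p t = 0 ∧ Q t = 0 := by
      intro t ht
      obtain ⟨b, hbS, htb⟩ := exists_lt_of_lt_csSup hSne ht.2
      exact hbS.2 t ⟨ht.1, htb.le⟩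
    have hatc : w c = 0 ∧ p c = 0 ∧ Q c = 0 := by
      rcases eq_or_lt_of_le hc0 with h | h
      · rw [← h]; exact ⟨hw0, hp0, hQ0⟩
      · have hsub : Ico 0 c ⊆ Ico 0 ε := Ico_subset_Ico le_rfl hcε.le
        exact ⟨zero_at_endpoint h ((hwcont c hcmem).mono hsub) (fun t ht => (hless t ht).1),
          zero_at_endpoint h ((hpcont c hcmem).mono hsub) (fun t ht => (hless t ht).2.1),
          zero_at_endpoint h ((hQcont c hcmem).mono hsub) (fun t ht => (hless t ht).2.2)⟩
    have hczero : ∀ t ∈ Icc 0 c, w t = 0 ∧ p t = 0 ∧ Q t = 0 := by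
      intro t ht
      rcases lt_or_eq_of_le ht.2 with h | h
      · exact hless t ⟨ht.1, h⟩
      · rw [h]; exact hatc
    have hstep : ∀ h : ℝ, 0 < h → c + h ≤ x →
        IntervalIntegrable k volume c (c+h) →
        4*j*h*(∫ t in c..(c+h), k t) < 1 →
        ∀ t ∈ Icc c (c+h), w t = 0 ∧ p t = 0 ∧ Q t = 0 := by
      intro h hh hchx hint hsm
      have hsub1 : Icc c (c+h) ⊆ Ico 0 ε :=
        fun t ht => ⟨le_trans hc0 ht.1, lt_of_le_of_lt (le_trans ht.2 hchx) hxε⟩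
      have hsub2 : Ioo c (c+h) ⊆ Ioo 0 ε :=
        fun t ht => ⟨lt_of_le_of_lt hc0 ht.1, lt_of_lt_of_le ht.2 (le_trans hchx hxε.le)⟩
      have hsub3 : Ioc c (c+h) ⊆ Ioo 0 ε :=
        fun t ht => ⟨lt_of_le_of_lt hc0 ht.1, lt_of_le_of_lt (le_trans ht.2 hchx) hxε⟩
      exact contraction_step j hj w p Q k c h hh
        (hwcont.mono hsub1) (hpcont.mono hsub1) (hQcont.mono hsub1)
        hk0 (hkIoo.mono hsub3) hint
        (fun y hy => hwd y (hsub2 hy)) (fun y hy => hpd y (hsub2 hy))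
        (fun y hy => hQd y (hsub2 hy))
        hatc.1 hatc.2.1 hatc.2.2 hsm
    have hceqx : c = x := by
      by_contra hne
      have hcltx : c < x := lt_of_le_of_ne hcx hne
      rcases eq_or_lt_of_le hc0 with hceq0 | hcpos
      · -- c = 0 : singular step
        have hc0' : c = 0 := hceq0.symm
        have h24 : (0:ℝ) < 24*j*Ck+1 := by linarith only [mul_pos hj hCk]
        set h0 : ℝ := min (δ₁/2) (min 1 (min (x - c) (1/(24*j*Ck+1)))) with hh0def
        have hh0pos : 0 < h0 := by
          apply lt_min (by linarith only [hδ₁pos])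
          exact lt_min one_pos (lt_min (by linarith only [hcltx, hceq0]) (div_pos one_pos h24))
        have hh0δ : h0 < δ₁ := lt_of_le_of_lt (min_le_left _ _) (by linarith [hδ₁pos])
        have hh0one : h0 ≤ 1 := le_trans (min_le_right _ _) (min_le_left _ _)
        have hh0xc : h0 ≤ x - c :=
          le_trans (min_le_right _ _) (le_trans (min_le_right _ _) (min_le_left _ _))
        have hh0inv : h0 ≤ 1/(24*j*Ck+1) :=
          le_trans (min_le_right _ _) (le_trans (min_le_right _ _) (min_le_right _ _))
        have hint : IntervalIntegrable k volume c (c+h0) := by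
          rw [hc0', zero_add]
          exact hkint0 h0 hh0pos hh0δ
        have hIle : (∫ t in c..(c+h0), k t) ≤ 3*Ck := by
          rw [hc0', zero_add]
          exact hIb h0 hh0pos hh0one hh0δ
        have hchx' : c + h0 ≤ x := by linarith
        have hsm : 4*j*h0*(∫ t in c..(c+h0), k t) < 1 := by
          have hin : 0 ≤ ∫ t in c..(c+h0), k t := by
            rw [hc0', zero_add]
            exact intervalIntegral.integral_nonneg hh0pos.le (fun u _ => hk0 u)
          have hb2 : h0*(24*j*Ck+1) ≤ 1 := (le_div_iff₀ h24).mp hh0inv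
          have hmul := mul_le_mul_of_nonneg_left hIle
            (mul_nonneg (mul_nonneg (by norm_num) hj.le) hh0pos.le : (0:ℝ) ≤ 4*j*h0)
          linarith only [hmul, hb2, mul_pos (mul_pos hj hCk) hh0pos, hh0pos]
        have hzz := hstep h0 hh0pos hchx' hint hsm
        have hmemS : c + h0 ∈ S := by
          constructor
          · exact ⟨by linarith, hchx'⟩
          · intro t ht
            rcases le_or_gt t c with h | h
            · exact hczero t ⟨ht.1, h⟩
            · exact hzz t ⟨h.le, ht.2⟩
        have := le_csSup hSbdd hmemS
        linarith
      · -- 0 < c : regular step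
        have hIccx : Icc c x ⊆ Ioo 0 ε :=
          fun t ht => ⟨lt_of_lt_of_le hcpos ht.1, lt_of_le_of_lt ht.2 hxε⟩
        have hkcont : ContinuousOn k (Icc c x) := hkIoo.mono hIccx
        obtain ⟨K, hK⟩ := (isCompact_Icc).exists_bound_of_continuousOn hkcont
        set K' := max K 0 with hK'def
        have hK'0 : 0 ≤ K' := le_max_right _ _
        have hKb : ∀ t ∈ Icc c x, k t ≤ K' := by
          intro t ht
          have := hK t ht
          rw [Real.norm_eq_abs] at this
          exact le_trans (le_trans (le_abs_self _) this) (le_max_left _ _)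
        have hK1 : (0:ℝ) < K'+1 := by linarith only [hK'0]
        have h4jK : (0:ℝ) < 4*j*(K'+1) :=
          mul_pos (mul_pos (by norm_num : (0:ℝ) < 4) hj) hK1
        set h1 : ℝ := min (x - c) (min 1 (1/(4*j*(K'+1)))) with hh1def
        have hh1pos : 0 < h1 :=
          lt_min (by linarith only [hcltx]) (lt_min one_pos (div_pos one_pos h4jK))
        have hh1xc : h1 ≤ x - c := min_le_left _ _
        have hh1x : c + h1 ≤ x := by linarith
        have hsubI : Icc c (c+h1) ⊆ Icc c x := Icc_subset_Icc le_rfl hh1x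
        have hint : IntervalIntegrable k volume c (c+h1) :=
          (hkcont.mono hsubI).intervalIntegrable_of_Icc (by linarith)
        have hIle : (∫ t in c..(c+h1), k t) ≤ K'*h1 := by
          have hm := intervalIntegral.integral_mono_on (by linarith : c ≤ c+h1) hint
            (intervalIntegrable_const (c := K')) (fun t ht => hKb t (hsubI ht))
          rw [intervalIntegral.integral_const] at hm
          simp only [smul_eq_mul] at hm
          calc (∫ t in c..(c+h1), k t) ≤ (c + h1 - c) * K' := hm
            _ = K'*h1 := by ring
        have hsm : 4*j*h1*(∫ t in c..(c+h1), k t) < 1 := by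
          have hin : 0 ≤ ∫ t in c..(c+h1), k t :=
            intervalIntegral.integral_nonneg (by linarith) (fun u _ => hk0 u)
          have hb1 : h1 ≤ 1/(4*j*(K'+1)) := le_trans (min_le_right _ _) (min_le_right _ _)
          have hb2 : h1*(4*j*(K'+1)) ≤ 1 := (le_div_iff₀ h4jK).mp hb1
          have hb3 : h1 ≤ 1 := le_trans (min_le_right _ _) (min_le_left _ _)
          have hmul := mul_le_mul_of_nonneg_left hIle
            (mul_nonneg (mul_nonneg (by norm_num) hj.le) hh1pos.le : (0:ℝ) ≤ 4*j*h1)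
          nlinarith only [hmul, hb2, hb3, mul_pos hj hh1pos,
            mul_nonneg (mul_nonneg hj.le hh1pos.le) hK'0]
        have hzz := hstep h1 hh1pos hh1x hint hsm
        have hmemS : c + h1 ∈ S := by
          constructor
          · exact ⟨by linarith, hh1x⟩
          · intro t ht
            rcases le_or_gt t c with h | h
            · exact hczero t ⟨ht.1, h⟩
            · exact hzz t ⟨h.le, ht.2⟩
        have := le_csSup hSbdd hmemS
        linarith
    rw [hceqx] at hczero
    have hfin : U x ^ 2 - 1 - V x ^ 2 - D x = 0 := (hczero x ⟨hx.1, le_rfl⟩).1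
    linarith
end

section
/- Let k̂, β̂ ∈ ℝ with k̂² > 3, set U = k̂/(2√(k̂² − 3)) and V = (2k̂³ − 9k̂ + 27β̂)/(−2(k̂² − 3)^{3/2}). If |U| ≤ 1, |V| ≤ 1, Δ = 18k̂β̂ + k̂² − 4 − 4k̂³β̂ − 27β̂² > 0, and arccos(U) = (1/3)arccos(V), then β̂ = 0 and k̂² ≥ 4. -/
theorem stmt_14 (k b U V : ℝ) (hk : 3 < k ^ 2)
    (hU : U = k / (2 * Real.sqrt (k ^ 2 - 3)))
    (hV : V = (2 * k ^ 3 - 9 * k + 27 * b) / (-2 * Real.sqrt (k ^ 2 - 3) ^ 3))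
    (hU1 : |U| ≤ 1) (hV1 : |V| ≤ 1)
    (hΔ : 0 < 18 * k * b + k ^ 2 - 4 - 4 * k ^ 3 * b - 27 * b ^ 2)
    (harc : Real.arccos U = (1 / 3) * Real.arccos V) :
    b = 0 ∧ 4 ≤ k ^ 2 := by
  set s := Real.sqrt (k ^ 2 - 3) with hs
  have hspos : 0 < s := Real.sqrt_pos.mpr (by linarith)
  have hs2 : s ^ 2 = k ^ 2 - 3 := Real.sq_sqrt (by linarith)
  obtain ⟨hU1l, hU1r⟩ := abs_le.mp hU1
  obtain ⟨hV1l, hV1r⟩ := abs_le.mp hV1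
  have harc' : Real.arccos V = 3 * Real.arccos U := by linarith
  have hVeq : V = Real.cos (3 * Real.arccos U) := by
    rw [← harc', Real.cos_arccos hV1l hV1r]
  rw [Real.cos_three_mul, Real.cos_arccos hU1l hU1r] at hVeq
  have hb : b = 0 := by
    rw [hU, hV] at hVeq
    field_simp at hVeq
    have h4 : s ^ 4 = (k ^ 2 - 3) ^ 2 := by
      rw [show s ^ 4 = (s ^ 2) ^ 2 by ring, hs2]
    have h6 : s ^ 6 = (k ^ 2 - 3) ^ 3 := by
      rw [show s ^ 6 = (s ^ 2) ^ 3 by ring, hs2]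
    have key : b * (432 * (k ^ 2 - 3) ^ 2) = 0 := by
      linear_combination (-4*(k^2-3)^2) * hVeq + (48*k*(k^2-3)^2) * hs2
    have hX : (0 : ℝ) < 432 * (k ^ 2 - 3) ^ 2 := by nlinarith
    exact (mul_eq_zero.mp key).resolve_right hX.ne'
  subst hb
  exact ⟨rfl, by nlinarith⟩
end
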